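/- Let p > 2 be prime and r a positive integer with r ≡ a (mod p-1) where 1 ≤ a ≤ p-1. Then (1/p)·Σ_{0<j<r, j≡a mod (p-1)} C(r,j) ≡ (a-r)/a (mod p), i.e., a·Σ_{0<j<r, j≡a mod (p-1)} C(r,j) ≡ p·(a-r) (mod p²). -/

import Mathlib

open Finset



lemma aux_lift {p : ℕ} (hp : p.Prime) {x y : ℤ} (h : (p:ℤ) ∣ x - y) :
    (p:ℤ)^2 ∣ x^p - y^p := by
  rw [← geom_sum₂_mul x y p, sq]
  apply mul_dvd_mul _ h
  have h0 : ((∑ i ∈ range p, x ^ i * y ^ (p - 1 - i) : ℤ) : ZMod p) = 0 := by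
    push_cast
    have hxy : (x : ZMod p) = (y : ZMod p) := by
      have : ((x - y : ℤ) : ZMod p) = 0 := by
        rw [ZMod.intCast_zmod_eq_zero_iff_dvd]; exact_mod_cast h
      push_cast at this
      linear_combination this
    calc ∑ i ∈ range p, (x:ZMod p) ^ i * (y:ZMod p) ^ (p - 1 - i)
        = ∑ i ∈ range p, (y:ZMod p) ^ (p-1) := by
          refine sum_congr rfl fun i hi => ?_
          rw [hxy, ← pow_add]
          congr 1
          have := mem_range.mp hi
          omega
      _ = p * (y:ZMod p)^(p-1) := by rw [sum_const, card_range, nsmul_eq_mul]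
      _ = 0 := by simp [ZMod.natCast_self]
  exact (ZMod.intCast_zmod_eq_zero_iff_dvd _ p).mp h0

lemma aux_lift_nat {p : ℕ} (hp : p.Prime) {m n : ℕ} (h : m ≡ n [MOD p]) :
    ((m : ZMod (p^2)))^p = ((n : ZMod (p^2)))^p := by
  have h1 : (p:ℤ) ∣ (m:ℤ) - n := (Nat.ModEq.dvd h.symm)
  have h2 := aux_lift hp h1
  have h3 : (((m:ℤ)^p - (n:ℤ)^p : ℤ) : ZMod (p^2)) = 0 := by
    rw [ZMod.intCast_zmod_eq_zero_iff_dvd]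
    push_cast
    exact h2
  push_cast at h3
  linear_combination h3

def Wf (p : ℕ) (u : (ZMod p)ˣ) : ZMod (p^2) := (((u : ZMod p).val : ZMod (p^2)))^p

lemma Wf_one {p : ℕ} (hp : p.Prime) : Wf p 1 = 1 := by
  haveI : Fact (1 < p) := ⟨hp.one_lt⟩
  simp [Wf, ZMod.val_one]

lemma Wf_mul {p : ℕ} (hp : p.Prime) (u v : (ZMod p)ˣ) :
    Wf p (u * v) = Wf p u * Wf p v := by
  unfold Wf
  rw [← mul_pow, ← Nat.cast_mul]
  apply aux_lift_nat hp
  rw [Units.val_mul, ZMod.val_mul]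
  exact Nat.mod_modEq _ p

lemma Wf_pow {p : ℕ} (hp : p.Prime) (u : (ZMod p)ˣ) (n : ℕ) :
    Wf p (u ^ n) = (Wf p u) ^ n := by
  induction n with
  | zero => simpa using Wf_one hp
  | succ n ih =>
      have : u ^ (n+1) = u ^ n * u := pow_succ u n
      rw [this, Wf_mul hp, ih]
      exact (pow_succ _ n).symm

lemma Wf_q {p : ℕ} (hp : p.Prime) (u : (ZMod p)ˣ) : (Wf p u) ^ (p - 1) = 1 := by
  haveI : Fact p.Prime := ⟨hp⟩
  rw [← Wf_pow hp, ZMod.units_pow_card_sub_one_eq_one, Wf_one hp]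

lemma Wf_inv_mul {p : ℕ} (hp : p.Prime) (u : (ZMod p)ˣ) :
    Wf p u⁻¹ * Wf p u = 1 := by
  rw [← Wf_mul hp, inv_mul_cancel, Wf_one hp]

/-- reduction mod p of Wf -/
lemma Wf_red {p : ℕ} (hp : p.Prime) (u : (ZMod p)ˣ) :
    (ZMod.castHom (dvd_pow_self p (two_ne_zero)) (ZMod p)) (Wf p u) = (u : ZMod p) := by
  haveI : Fact p.Prime := ⟨hp⟩
  unfold Wf
  rw [map_pow, map_natCast]
  rw [ZMod.natCast_val, ZMod.cast_id]
  exact ZMod.pow_card _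

lemma aux_sq_zero {p : ℕ} (hp : p.Prime) {z : ZMod (p^2)}
    (h : (ZMod.castHom (dvd_pow_self p (two_ne_zero)) (ZMod p)) z = 0) : z^2 = 0 := by
  haveI : NeZero (p^2) := ⟨pow_ne_zero _ hp.ne_zero⟩
  have hz : ((z.val : ℕ) : ZMod (p^2)) = z := by
    rw [ZMod.natCast_val, ZMod.cast_id]
  have h2 : ((z.val : ℕ) : ZMod p) = 0 := by
    rw [← map_natCast (ZMod.castHom (dvd_pow_self p (two_ne_zero)) (ZMod p)), hz, h]
  obtain ⟨m, hm⟩ := (ZMod.natCast_eq_zero_iff _ _).mp h2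
  rw [← hz, hm]
  push_cast
  have hpp : ((p:ZMod (p^2)))^2 = 0 := by
    have := ZMod.natCast_self (p^2)
    push_cast at this
    exact this
  rw [mul_pow]
  rw [hpp, zero_mul]

lemma aux_unit {p : ℕ} (hp : p.Prime) {z : ZMod (p^2)}
    (h : (ZMod.castHom (dvd_pow_self p (two_ne_zero)) (ZMod p)) z ≠ 0) : IsUnit z := by
  haveI : NeZero (p^2) := ⟨pow_ne_zero _ hp.ne_zero⟩
  have hz : ((z.val : ℕ) : ZMod (p^2)) = z := by
    rw [ZMod.natCast_val, ZMod.cast_id]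
  have h2 : ¬ (p ∣ z.val) := by
    intro hd
    apply h
    rw [← hz, map_natCast]
    exact (ZMod.natCast_eq_zero_iff _ _).mpr hd
  rw [← hz]
  rw [ZMod.isUnit_iff_coprime]
  exact Nat.Coprime.pow_right _ (Nat.coprime_comm.mp ((Nat.Prime.coprime_iff_not_dvd hp).mpr h2))

lemma aux_onepz {A : Type*} [CommRing A] {z : A} (hz : z^2 = 0) (k : ℕ) :
    (1 + z)^k = 1 + k * z := by
  induction k with
  | zero => simp
  | succ k ih =>
    rw [pow_succ, ih]
    have : (k:A) * z * z = 0 := by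
      have : (k:A) * (z * z) = 0 := by rw [← sq z, hz, mul_zero]
      linear_combination this
    push_cast
    linear_combination (1 + (k:A) * z) * (0:A) + this

/-- roots of unity filter -/

lemma aux_filter {p : ℕ} [hpf : Fact p.Prime] (j : ℕ) :
    ∑ u : (ZMod p)ˣ, (Wf p u)^j
      = if (p-1) ∣ j then (((p-1 : ℕ)) : ZMod (p^2)) else 0 := by
  have hp := hpf.out
  by_cases h : (p-1) ∣ j
  · have h1 : ∀ u : (ZMod p)ˣ, (Wf p u)^j = 1 := by
      intro u
      obtain ⟨t, ht⟩ := h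
      rw [ht, pow_mul, Wf_q hp, one_pow]
    simp only [h1]
    rw [sum_const, card_univ, nsmul_eq_mul, mul_one, ZMod.card_units, if_pos h]
  · obtain ⟨g, hg⟩ := IsCyclic.exists_generator (α := (ZMod p)ˣ)
    have horder : orderOf g = p - 1 := by
      rw [orderOf_eq_card_of_forall_mem_zpowers hg, Nat.card_eq_fintype_card, ZMod.card_units]
    have hgj : g^j ≠ 1 := by
      intro hgj
      exact h (horder ▸ orderOf_dvd_of_pow_eq_one hgj)
    have hunit : IsUnit ((Wf p g)^j - 1) := by
      apply aux_unit hp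
      rw [map_sub, map_pow, map_one, Wf_red hp]
      intro hc
      apply hgj
      apply Units.ext
      push_cast
      have := sub_eq_zero.mp hc
      simpa using this
    have key : (Wf p g)^j * (∑ u : (ZMod p)ˣ, (Wf p u)^j) = ∑ u : (ZMod p)ˣ, (Wf p u)^j := by
      rw [Finset.mul_sum]
      apply Fintype.sum_equiv (Equiv.mulLeft g)
      intro u
      rw [← mul_pow, ← Wf_mul hp]
      rfl
    have : ((Wf p g)^j - 1) * (∑ u : (ZMod p)ˣ, (Wf p u)^j) = 0 := by
      rw [sub_mul, one_mul, key, sub_self]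
    rw [if_neg h]
    exact (IsUnit.mul_right_eq_zero hunit).mp this

def Phi (p c m : ℕ) : ℕ :=
  ∑ j ∈ (Finset.range (m+1)).filter (fun j => (p-1) ∣ (c + j)), m.choose j

lemma aux_main {p : ℕ} [hpf : Fact p.Prime] (c m : ℕ) :
    ∑ u : (ZMod p)ˣ, (Wf p u)^c * (1 + Wf p u)^m
      = ((p-1 : ℕ) : ZMod (p^2)) * ((Phi p c m : ℕ) : ZMod (p^2)) := by
  have expand : ∀ u : (ZMod p)ˣ, (Wf p u)^c * (1 + Wf p u)^m
      = ∑ j ∈ range (m+1), (Wf p u)^(c+j) * (m.choose j : ZMod (p^2)) := by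
    intro u
    rw [add_comm (1 : ZMod (p^2)) (Wf p u), add_pow, Finset.mul_sum]
    refine sum_congr rfl fun j hj => ?_
    rw [one_pow, mul_one, pow_add]
    ring
  simp only [expand]
  rw [Finset.sum_comm]
  have inner : ∀ j, ∑ u : (ZMod p)ˣ, (Wf p u)^(c+j) * (m.choose j : ZMod (p^2))
      = (if (p-1) ∣ (c+j) then ((p-1 : ℕ) : ZMod (p^2)) else 0) * (m.choose j : ZMod (p^2)) := by
    intro j
    rw [← Finset.sum_mul, aux_filter]
  simp only [inner]
  unfold Phi
  rw [Finset.sum_filter]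
  push_cast
  rw [Finset.mul_sum]
  refine sum_congr rfl fun j hj => ?_
  split_ifs <;> ring

lemma aux_dvd2 {q x : ℕ} (hq : 0 < q) (hx : x ≤ 2*q) (h : q ∣ x) :
    x = 0 ∨ x = q ∨ x = 2*q := by
  obtain ⟨t, rfl⟩ := h
  have ht : t ≤ 2 := by
    by_contra hc
    push_neg at hc
    have : q * 3 ≤ q * t := Nat.mul_le_mul_left q hc
    omega
  interval_cases t <;> omega

lemma aux_cond {q a : ℕ} (hq : 0 < q) (ha : a ≤ q) (j : ℕ) :
    q ∣ (q - a + j) ↔ j % q = a % q := by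
  have h1 : q - a + a = q := Nat.sub_add_cancel ha
  constructor
  · intro h
    have h2 : q - a + j ≡ 0 [MOD q] := Nat.modEq_zero_iff_dvd.mpr h
    have h3 : q - a + a ≡ 0 [MOD q] := by
      rw [h1]; exact Nat.modEq_zero_iff_dvd.mpr dvd_rfl
    exact Nat.ModEq.add_left_cancel' (q - a) (h2.trans h3.symm)
  · intro h
    have h2 : q - a + j ≡ q - a + a [MOD q] := Nat.ModEq.add_left _ h
    rw [h1] at h2
    exact Nat.modEq_zero_iff_dvd.mp (h2.trans (Nat.modEq_zero_iff_dvd.mpr dvd_rfl))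

lemma aux_phiA {p a : ℕ} (hp2 : 2 < p) (ha1 : 1 ≤ a) (ha2 : a ≤ p-1) :
    Phi p (p-1-a) a = 1 + (if a = p-1 then 1 else 0) := by
  have hq : 0 < p - 1 := by omega
  unfold Phi
  have hset : (range (a+1)).filter (fun j => (p-1) ∣ ((p-1-a) + j))
      = if a = p-1 then ({0, a} : Finset ℕ) else {a} := by
    split_ifs with h
    · ext j
      simp only [mem_filter, mem_range, mem_insert, mem_singleton]
      constructor
      · rintro ⟨hj, hd⟩
        have := aux_dvd2 hq (by omega) hd
        omega
      · intro hj
        rcases hj with h0 | h0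
        · exact ⟨by omega, by rw [h0, h]; simp⟩
        · exact ⟨by omega, by rw [h0, Nat.sub_add_cancel ha2]⟩
    · ext j
      simp only [mem_filter, mem_range, mem_singleton]
      constructor
      · rintro ⟨hj, hd⟩
        have := aux_dvd2 hq (by omega) hd
        omega
      · intro h0
        exact ⟨by omega, by rw [h0, Nat.sub_add_cancel ha2]⟩
  rw [hset]
  split_ifs with h
  · rw [Finset.sum_insert (by simp; omega), Finset.sum_singleton]
    simp [Nat.choose_self]
  · simp [Nat.choose_self]

lemma aux_phiC {p a : ℕ} (hp2 : 2 < p) (ha1 : 1 ≤ a) (ha2 : a ≤ p-1) :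
    Phi p 0 a = 1 + (if a = p-1 then 1 else 0) := by
  have hq : 0 < p - 1 := by omega
  unfold Phi
  have hset : (range (a+1)).filter (fun j => (p-1) ∣ (0 + j))
      = if a = p-1 then ({0, a} : Finset ℕ) else {0} := by
    split_ifs with h
    · ext j
      simp only [mem_filter, mem_range, mem_insert, mem_singleton, zero_add]
      constructor
      · rintro ⟨hj, hd⟩
        have := aux_dvd2 hq (by omega) hd
        omega
      · intro hj
        rcases hj with h0 | h0
        · exact ⟨by omega, by rw [h0]; exact dvd_zero _⟩
        · exact ⟨by omega, by rw [h0, h]⟩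
    · ext j
      simp only [mem_filter, mem_range, mem_singleton, zero_add]
      constructor
      · rintro ⟨hj, hd⟩
        have := aux_dvd2 hq (by omega) hd
        omega
      · intro h0
        exact ⟨by omega, by rw [h0]; exact dvd_zero _⟩
  rw [hset]
  split_ifs with h
  · rw [Finset.sum_insert (by simp; omega), Finset.sum_singleton]
    simp [Nat.choose_self]
  · simp

lemma aux_phiD {p a : ℕ} (hp2 : 2 < p) (ha1 : 1 ≤ a) (ha2 : a ≤ p-1) :
    Phi p 0 (a + (p-1)) = 1 + (a + (p-1)).choose (p-1) + (if a = p-1 then 1 else 0) := by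
  have hq : 0 < p - 1 := by omega
  unfold Phi
  have hset : (range (a + (p-1) + 1)).filter (fun j => (p-1) ∣ (0 + j))
      = if a = p-1 then ({0, p-1, 2*(p-1)} : Finset ℕ) else {0, p-1} := by
    split_ifs with h
    · ext j
      simp only [mem_filter, mem_range, mem_insert, mem_singleton, zero_add]
      constructor
      · rintro ⟨hj, hd⟩
        have := aux_dvd2 hq (by omega) hd
        omega
      · intro hj
        rcases hj with h0 | h0 | h0
        · exact ⟨by omega, by rw [h0]; exact dvd_zero _⟩
        · exact ⟨by omega, by rw [h0]⟩
        · exact ⟨by omega, by rw [h0]; exact Dvd.intro 2 (by ring)⟩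
    · ext j
      simp only [mem_filter, mem_range, mem_insert, mem_singleton, zero_add]
      constructor
      · rintro ⟨hj, hd⟩
        have := aux_dvd2 hq (by omega) hd
        omega
      · intro hj
        rcases hj with h0 | h0
        · exact ⟨by omega, by rw [h0]; exact dvd_zero _⟩
        · exact ⟨by omega, by rw [h0]⟩
  rw [hset]
  split_ifs with h
  · rw [Finset.sum_insert (by simp; omega), Finset.sum_insert (by simp; omega),
      Finset.sum_singleton]
    have h2 : 2*(p-1) = a + (p-1) := by omega
    rw [h2, Nat.choose_self, Nat.choose_zero_right]
    omega
  · rw [Finset.sum_insert (by simp; omega), Finset.sum_singleton]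
    rw [Nat.choose_zero_right]
    omega

lemma aux_phiB {p r a : ℕ} (hp2 : 2 < p) (hr : 1 ≤ r) (ha1 : 1 ≤ a) (ha2 : a ≤ p-1)
    (hra : r ≡ a [MOD p - 1]) :
    Phi p (p-1-a) r
      = (∑ j ∈ (Finset.Ioo 0 r).filter (fun j => j % (p - 1) = a % (p - 1)), r.choose j)
        + 1 + (if a = p-1 then 1 else 0) := by
  have hq : 0 < p - 1 := by omega
  unfold Phi
  have hcong : (range (r+1)).filter (fun j => (p-1) ∣ ((p-1-a) + j))
      = (range (r+1)).filter (fun j => j % (p-1) = a % (p-1)) := by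
    apply filter_congr
    intro j _
    exact aux_cond hq ha2 j
  rw [hcong, sum_filter]
  have hseteq : range (r+1) = insert 0 (insert r (Ioo 0 r)) := by
    ext j
    simp only [mem_range, mem_insert, mem_Ioo]
    omega
  rw [hseteq, Finset.sum_insert (by simp; omega), Finset.sum_insert (by simp)]
  have h0 : (if 0 % (p-1) = a % (p-1) then r.choose 0 else 0)
      = (if a = p-1 then 1 else 0) := by
    have hiff : 0 % (p-1) = a % (p-1) ↔ a = p-1 := by
      rw [Nat.zero_mod]
      constructor
      · intro h
        have hd : (p-1) ∣ a := Nat.dvd_of_mod_eq_zero h.symm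
        exact le_antisymm ha2 (Nat.le_of_dvd (by omega) hd)
      · intro h
        rw [h, Nat.mod_self]
    split_ifs with h1 h2 h2
    · exact Nat.choose_zero_right r
    · exact absurd (hiff.mp h1) h2
    · exact absurd (hiff.mpr h2) h1
    · rfl
  have hrterm : (if r % (p-1) = a % (p-1) then r.choose r else 0) = 1 := by
    rw [if_pos (show r % (p-1) = a % (p-1) from hra), Nat.choose_self]
  rw [h0, hrterm, ← sum_filter]
  omega

lemma aux_choose_mod {p n : ℕ} (hp : p.Prime) (hn : n < p) :
    (((p + n).choose n : ℕ) : ZMod p) = 1 := by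
  rw [Nat.add_choose_eq]
  push_cast
  rw [Finset.sum_eq_single (0, n)]
  · simp
  · rintro ⟨i, j⟩ hmem hne
    rw [Finset.HasAntidiagonal.mem_antidiagonal] at hmem
    have hi0 : i ≠ 0 := by
      intro h
      apply hne
      simp at hmem ⊢
      omega
    have hip : i < p := by omega
    have : ((p.choose i : ℕ) : ZMod p) = 0 := by
      rw [ZMod.natCast_eq_zero_iff]
      exact Nat.Prime.dvd_choose_self hp hi0 hip
    simp [this]
  · intro h
    exfalso
    apply h
    rw [Finset.HasAntidiagonal.mem_antidiagonal]
    simp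

lemma aux_choose_id {p a : ℕ} (hp2 : 2 < p) (ha1 : 1 ≤ a) (ha2 : a ≤ p - 1) :
    a * (a + (p-1)).choose (p-1) = p * (a + (p-1)).choose (a-1) := by
  have h1 : (a + (p-1)).choose (p-1) = (a + (p-1)).choose a := by
    have := Nat.choose_symm (show p - 1 ≤ a + (p-1) by omega) (n := a + (p-1))
    rw [show a + (p-1) - (p-1) = a by omega] at this
    exact this.symm
  rw [h1]
  have h2 := Nat.choose_succ_right_eq (a + (p-1)) (a-1)
  rw [show a - 1 + 1 = a by omega, show a + (p-1) - (a-1) = p by omega] at h2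
  rw [mul_comm, h2, mul_comm]

lemma aux_ppR {p : ℕ} (hp : 0 < p) : (p : ZMod (p^2)) * (p : ZMod (p^2)) = 0 := by
  have := ZMod.natCast_self (p^2)
  push_cast at this
  linear_combination this

lemma aux_Wneg1 {p : ℕ} (hp : p.Prime) (hp2 : 2 < p) : Wf p (-1) = -1 := by
  haveI : Fact p.Prime := ⟨hp⟩
  have hval : ((-1 : (ZMod p)ˣ) : ZMod p).val = p - 1 := by
    simp only [Units.val_neg, Units.val_one]
    have hneg : (-1 : ZMod p) = ((p-1 : ℕ) : ZMod p) := by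
      push_cast [Nat.cast_sub (by omega : 1 ≤ p)]
      simp [ZMod.natCast_self]
    rw [hneg, ZMod.val_natCast, Nat.mod_eq_of_lt (by omega)]
  unfold Wf
  rw [hval]
  have hcast : ((p - 1 : ℕ) : ZMod (p^2)) = (p : ZMod (p^2)) - 1 := by
    push_cast [Nat.cast_sub (by omega : 1 ≤ p)]
    ring
  rw [hcast]
  have hodd : Odd p := hp.odd_of_ne_two (by omega)
  have hz : (-(p : ZMod (p^2)))^2 = 0 := by
    linear_combination aux_ppR (by omega : 0 < p)
  calc ((p : ZMod (p^2)) - 1)^p = (-(1 + -(p:ZMod (p^2))))^p := by ring_nf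
    _ = -((1 + -(p:ZMod (p^2)))^p) := Odd.neg_pow hodd _
    _ = -(1 + p * -(p:ZMod (p^2))) := by rw [aux_onepz hz p]
    _ = -1 := by linear_combination aux_ppR (by omega : 0 < p)

lemma aux_ptwise {p : ℕ} (hp : p.Prime) (hp2 : 2 < p) (a b k : ℕ) (ha1 : 1 ≤ a)
    (u : (ZMod p)ˣ) :
    (Wf p u)^b * (1 + Wf p u)^(a + (p-1)*k)
      = (Wf p u)^b * (1 + Wf p u)^a
        + k * ((Wf p u)^b * ((1 + Wf p u)^a * ((1 + Wf p u)^(p-1) - 1))) := by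
  haveI : Fact p.Prime := ⟨hp⟩
  by_cases hu : u = -1
  · subst hu
    rw [aux_Wneg1 hp hp2]
    have h0 : (1 : ZMod (p^2)) + (-1) = 0 := by ring
    rw [h0, zero_pow (by omega : a + (p-1)*k ≠ 0), zero_pow (by omega : a ≠ 0)]
    ring
  · have hz : ((1 + Wf p u)^(p-1) - 1)^2 = 0 := by
      apply aux_sq_zero hp
      simp only [map_sub, map_pow, map_add, map_one, Wf_red hp]
      have hu1 : (1 : ZMod p) + (u : ZMod p) ≠ 0 := by
        intro hc
        apply hu
        apply Units.ext
        rw [Units.val_neg, Units.val_one]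
        linear_combination hc
      rw [ZMod.pow_card_sub_one_eq_one hu1, sub_self]
    rw [pow_add, pow_mul]
    have hrw : (1 + Wf p u)^(p-1) = 1 + ((1 + Wf p u)^(p-1) - 1) := by ring
    rw [hrw, aux_onepz hz k]
    ring

lemma aux_reindex {p : ℕ} [hpf : Fact p.Prime] {a b : ℕ} (hab : b + a = p - 1) :
    ∑ u : (ZMod p)ˣ, (Wf p u)^b * ((1 + Wf p u)^a * ((1 + Wf p u)^(p-1) - 1))
      = ∑ u : (ZMod p)ˣ, (1 + Wf p u)^a * ((1 + Wf p u)^(p-1) - 1) := by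
  have hp := hpf.out
  symm
  apply Fintype.sum_equiv (Equiv.inv (ZMod p)ˣ)
  intro u
  show (1 + Wf p u)^a * ((1 + Wf p u)^(p-1) - 1)
    = (Wf p u⁻¹)^b * ((1 + Wf p u⁻¹)^a * ((1 + Wf p u⁻¹)^(p-1) - 1))
  have key1 : 1 + Wf p u⁻¹ = Wf p u⁻¹ * (1 + Wf p u) := by
    rw [mul_add, mul_one, Wf_inv_mul hp]
    ring
  rw [key1, mul_pow, mul_pow, Wf_q hp, one_mul]
  have h1 : Wf p u⁻¹ ^ b * Wf p u⁻¹ ^ a = 1 := by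
    rw [← pow_add, hab, Wf_q hp]
  linear_combination (-((1 + Wf p u)^a * ((1 + Wf p u)^(p-1) - 1))) * h1

theorem stmt_1 (p r a : ℕ) (hp : p.Prime) (hp2 : 2 < p) (hr : 1 ≤ r)
    (ha1 : 1 ≤ a) (ha2 : a ≤ p - 1) (hra : r ≡ a [MOD p - 1]) :
    ((p : ℤ)^2) ∣ (a : ℤ) * (∑ j ∈ (Finset.Ioo 0 r).filter
        (fun j => j % (p - 1) = a % (p - 1)), (r.choose j : ℤ))
      - (p : ℤ) * ((a : ℤ) - (r : ℤ)) := by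
  haveI : Fact p.Prime := ⟨hp⟩
  -- decompose r = a + (p-1)*k
  obtain ⟨k, hk⟩ : ∃ k, r = a + (p-1) * k := by
    obtain ⟨t, ht⟩ := (Nat.ModEq.dvd hra : ((p-1 : ℕ) : ℤ) ∣ (a : ℤ) - r)
    refine ⟨(-t).toNat, ?_⟩
    have htn : ((-t).toNat : ℤ) = -t := by
      rw [Int.toNat_of_nonneg]
      by_contra hc
      push_neg at hc
      have h1 : (1:ℤ) ≤ t := by omega
      have h2 : ((p-1 : ℕ) : ℤ) * 1 ≤ ((p-1:ℕ) : ℤ) * t :=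
        mul_le_mul_of_nonneg_left h1 (by positivity)
      rw [← ht] at h2
      push_cast [Nat.cast_sub (by omega : 1 ≤ p)] at h2
      omega
    zify
    push_cast [Nat.cast_sub (by omega : 1 ≤ p)] at ht htn ⊢
    rw [htn]
    linarith
  set R := ZMod (p^2)
  set Q : R := ((p - 1 : ℕ) : R) with hQ
  set SN : ℕ := ∑ j ∈ (Finset.Ioo 0 r).filter
      (fun j => j % (p - 1) = a % (p - 1)), r.choose j with hSN
  set C1 : ℕ := (a + (p-1)).choose (p-1) with hC1
  set C2 : ℕ := (a + (p-1)).choose (a-1) with hC2def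
  have hb : (p - 1 - a) + a = p - 1 := by omega
  -- step 1: sum identity
  have h1 : Q * ((Phi p (p-1-a) r : ℕ) : R)
      = Q * ((Phi p (p-1-a) a : ℕ) : R)
        + k * (Q * ((Phi p 0 (a + (p-1)) : ℕ) : R) - Q * ((Phi p 0 a : ℕ) : R)) := by
    rw [← aux_main, ← aux_main, ← aux_main, ← aux_main]
    have e1 : ∑ u : (ZMod p)ˣ, (Wf p u)^(p-1-a) * (1 + Wf p u)^r
        = ∑ u : (ZMod p)ˣ, ((Wf p u)^(p-1-a) * (1 + Wf p u)^a
            + k * ((Wf p u)^(p-1-a) * ((1 + Wf p u)^a * ((1 + Wf p u)^(p-1) - 1)))) := by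
      refine sum_congr rfl fun u _ => ?_
      rw [hk]
      exact aux_ptwise hp hp2 a (p-1-a) k ha1 u
    rw [e1, Finset.sum_add_distrib, ← Finset.mul_sum, aux_reindex hb]
    congr 1
    have e2 : ∑ u : (ZMod p)ˣ, (1 + Wf p u)^a * ((1 + Wf p u)^(p-1) - 1)
        = ∑ u : (ZMod p)ˣ, ((Wf p u)^0 * (1 + Wf p u)^(a + (p-1))
            - (Wf p u)^0 * (1 + Wf p u)^a) := by
      refine sum_congr rfl fun u _ => ?_
      rw [pow_zero, one_mul, one_mul, pow_add]
      ring
    rw [e2, Finset.sum_sub_distrib]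
  -- substitute Phi values
  rw [aux_phiA hp2 ha1 ha2, aux_phiB hp2 hr ha1 ha2 hra, aux_phiC hp2 ha1 ha2,
    aux_phiD hp2 ha1 ha2] at h1
  rw [← hSN, ← hC1] at h1
  have h2 : Q * (SN : R) = (k : R) * Q * (C1 : R) := by
    push_cast at h1
    split_ifs at h1 with he <;> · push_cast at h1; linear_combination h1
  -- arithmetic facts
  have hpp : (p : R) * (p : R) = 0 := aux_ppR (by omega)
  have hC2p : (p : R) * (C2 : R) = (p : R) := by
    have hmod := aux_choose_mod hp (show a - 1 < p by omega)
    rw [show p + (a-1) = a + (p-1) by omega] at hmod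
    have hmodn : C2 % p = 1 % p := by
      have h' : ((C2 : ℕ) : ZMod p) = ((1:ℕ) : ZMod p) := by
        rw [hC2def, Nat.cast_one]
        exact hmod
      exact (ZMod.natCast_eq_natCast_iff _ _ _).mp h'
    have hd := Nat.div_add_mod C2 p
    rw [hmodn, Nat.mod_eq_of_lt (by omega : 1 < p)] at hd
    calc (p : R) * (C2 : R) = (p:R) * ((p * (C2 / p) + 1 : ℕ) : R) := by rw [hd]
      _ = (p : R) := by push_cast; erw [Nat.cast_mul]; linear_combination ((C2/p : ℕ) : R) * hpp
  have haC1 : ((a : ℕ) : R) * (C1 : R) = (p : R) := by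
    have hid := aux_choose_id hp2 ha1 ha2
    have := congrArg (fun n : ℕ => (n : R)) hid
    push_cast at this
    rw [← hC1, ← hC2def] at this
    exact (@Nat.cast_mul R _ a C1).symm.trans (this.trans ((@Nat.cast_mul R _ p C2).trans hC2p))
  have hQ1 : Q + 1 = (p : R) := by
    rw [hQ]
    push_cast [Nat.cast_sub (by omega : 1 ≤ p)]
    ring
  have hrR : (r : R) = (a : R) + Q * (k : R) := by
    rw [hk]
    push_cast
    rw [hQ]
    exact congrArg (fun x => (a:R) + x) (@Nat.cast_mul R _ (p-1) k)
  -- unit cancellation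
  have hQunit : IsUnit Q := by
    rw [hQ, ZMod.isUnit_iff_coprime]
    have hcop : Nat.Coprime (p-1) p := by
      have hnd : ¬ (p ∣ (p-1)) := fun hd => by
        have := Nat.le_of_dvd (by omega) hd
        omega
      exact (Nat.coprime_comm.mp ((hp.coprime_iff_not_dvd).mpr hnd))
    exact hcop.pow_right 2
  have hfinal : (a : R) * (SN : R) = (p : R) * ((a : R) - (r : R)) := by
    apply hQunit.mul_left_cancel
    calc Q * ((a:R) * (SN:R)) = (a:R) * (Q * (SN:R)) := by ring
      _ = (a:R) * ((k:R) * Q * (C1:R)) := by rw [h2]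
      _ = (k:R) * Q * ((a:R) * (C1:R)) := by ring
      _ = (k:R) * Q * (p:R) := by rw [haC1]
      _ = Q * ((p:R) * ((a:R) - (r:R))) := by
          rw [hrR]
          linear_combination ((k:R) * Q * (p:R)) * hQ1 + ((k:R) * Q) * hpp
  -- conversion to ℤ divisibility
  have hdvd : (((p^2 : ℕ) : ℤ)) ∣ ((a : ℤ) * (∑ j ∈ (Finset.Ioo 0 r).filter
        (fun j => j % (p - 1) = a % (p - 1)), (r.choose j : ℤ))
      - (p : ℤ) * ((a : ℤ) - (r : ℤ))) := by
    rw [← ZMod.intCast_zmod_eq_zero_iff_dvd]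
    push_cast
    have hSNc : ((SN : ℕ) : R) = ∑ j ∈ (Finset.Ioo 0 r).filter
        (fun j => j % (p - 1) = a % (p - 1)), ((r.choose j : ℕ) : R) := by
      rw [hSN, Nat.cast_sum]
    rw [hSNc] at hfinal
    linear_combination hfinal
  push_cast at hdvd
  exact hdvd
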